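/- Given symmetric positive semidefinite matrices Q and E with Q = Gᵀ M G for M symmetric positive definite, the quadratic matrix inequality E Q E − Q ⪯ 0 holds if and only if the block matrix [[Gᵀ M G, E Gᵀ],[G E, M⁻¹]] is positive semidefinite. -/

import Mathlib

open Matrix

theorem qmi_iff_lmi {m k : ℕ}
    (M : Matrix (Fin m) (Fin m) ℝ) (hM : M.PosDef)
    (G : Matrix (Fin m) (Fin k) ℝ)
    (Q : Matrix (Fin k) (Fin k) ℝ) (hQ : Q = Gᵀ * M * G)
    (E : Matrix (Fin k) (Fin k) ℝ) (hE : E.PosSemidef) :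
    (Q - E * Q * E).PosSemidef ↔
      (Matrix.fromBlocks (Gᵀ * M * G) (E * Gᵀ) (G * E) M⁻¹).PosSemidef := by
  have hMinv : (M⁻¹).PosDef := hM.inv
  have hIM : Invertible M := hM.isUnit.invertible
  have hI : Invertible M⁻¹ := (hMinv.isUnit).invertible
  have hBH : (E * Gᵀ)ᴴ = G * E := by
    ext i j
    simp [conjTranspose_apply, mul_apply]
    exact Finset.sum_congr rfl fun x _ => by rw [← hE.isHermitian.apply x j]; simp [mul_comm]
  rw [show G * E = (E * Gᵀ)ᴴ from hBH.symm,
    PosDef.fromBlocks₂₂ _ _ hMinv]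
  have : (E * Gᵀ) * (M⁻¹)⁻¹ * (E * Gᵀ)ᴴ = E * Q * E := by
    rw [hBH, Matrix.inv_inv_of_invertible, hQ]
    simp only [Matrix.mul_assoc]
  rw [this, hQ]
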